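/- With ψ_k defined as above, for all k ≥ 3 and all m > 0, ψ_k(m-1) < ψ_k(m) as ordinals. -/

import Mathlib

/-- The parametrized Ackermann function: `A a k b` is `A_a(k,b)`. -/
def A : ℕ → ℕ → ℕ → ℕ
  | 0, _, b => b + 1
  | a+1, k, 0 => (fun x => A a k x)^[k] 0
  | a+1, k, b+1 => (fun x => A a k x)^[k] (A (a+1) k b)
  termination_by a _ b => (a, b)

/-- `m = A_a(k,b) + l` is the `k`-normal form of `m`: `a` is maximal with
`A_a(k,0) ≤ m` and `b` is maximal with `A_a(k,b) ≤ m`. -/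
def IsNF (k m a b l : ℕ) : Prop :=
  m = A a k b + l ∧ A a k 0 ≤ m ∧
  (∀ a', A a' k 0 ≤ m → a' ≤ a) ∧
  (∀ b', A a k b' ≤ m → b' ≤ b)

/-- The graph of the hereditary base change operation `m ↦ m[k←k+1]`. -/
inductive BC (k : ℕ) : ℕ → ℕ → Prop
  | zero : BC k 0 0
  | step {a b l a' b'} :
      IsNF k (A a k b + l) a b l → BC k a a' → BC k b b' →
      BC k (A a k b + l) (A a' (k+1) b' + l)

open Ordinal in
/-- `-c + o`: truncated subtraction on finite ordinals, identity on infinite ones. -/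
noncomputable def msub (c : ℕ) (o : Ordinal) : Ordinal :=
  if o < Ordinal.omega0 then o - c else o

open Ordinal in
/-- The graph of the map `ψ_k` assigning ordinals below `ε₀` to natural numbers,
defined via `k`-normal forms. -/
inductive Psi (k : ℕ) : ℕ → Ordinal → Prop
  | zero : Psi k 0 0
  | base {b l : ℕ} : IsNF k (A 0 k b + l) 0 b l →
      Psi k (A 0 k b + l) ((b : Ordinal) + 1)
  | one {b l : ℕ} {ob : Ordinal} : IsNF k (A 1 k b + l) 1 b l → Psi k b ob →
      Psi k (A 1 k b + l) (omega0 * (1 + ob) + (l : Ordinal))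
  | ge {a b l : ℕ} {oa ob : Ordinal} : 2 ≤ a → IsNF k (A a k b + l) a b l →
      Psi k a oa → Psi k b ob →
      Psi k (A a k b + l) (omega0 ^ (omega0 + msub 2 oa) + omega0 * ob + (l : Ordinal))



lemma A_zero_eq (k b : ℕ) : A 0 k b = b + 1 := by simp [A]
lemma A_succ_zero (a k : ℕ) : A (a+1) k 0 = (A a k)^[k] 0 := by rw [A]
lemma A_succ_succ (a k b : ℕ) : A (a+1) k (b+1) = (A a k)^[k] (A (a+1) k b) := by rw [A]

lemma lt_iterate {f : ℕ → ℕ} (hf : ∀ x, x < f x) : ∀ j, 0 < j → ∀ x, x < f^[j] x := by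
  intro j
  induction j with
  | zero => omega
  | succ j ih =>
    intro _ x
    rw [Function.iterate_succ_apply']
    rcases Nat.eq_zero_or_pos j with hj | hj
    · subst hj; simpa using hf x
    · exact (ih hj x).trans (hf _)

lemma iterate_pred {f : ℕ → ℕ} {k : ℕ} (hk : 0 < k) (x : ℕ) : f^[k] x = f (f^[k-1] x) := by
  conv_lhs => rw [show k = (k-1)+1 by omega]
  rw [Function.iterate_succ_apply']

lemma lt_A {k : ℕ} (hk : 0 < k) : ∀ a b, b < A a k b := by
  intro a
  induction a with
  | zero => intro b; rw [A_zero_eq]; omega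
  | succ a ih =>
    intro b
    induction b with
    | zero => rw [A_succ_zero]; exact lt_iterate ih k hk 0
    | succ b ihb =>
      rw [A_succ_succ]
      have := lt_iterate ih k hk (A (a+1) k b)
      omega

lemma A_strictMono {k : ℕ} (hk : 0 < k) (a : ℕ) : StrictMono (A a k) := by
  apply strictMono_nat_of_lt_succ
  intro b
  cases a with
  | zero => rw [A_zero_eq, A_zero_eq]; omega
  | succ a => rw [A_succ_succ]; exact lt_iterate (lt_A hk a) k hk _

lemma A_zero_lt {k : ℕ} (hk : 2 ≤ k) (a : ℕ) : A a k 0 < A (a+1) k 0 := by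
  have hk1 : 0 < k := by omega
  rw [A_succ_zero, iterate_pred hk1]
  exact (A_strictMono hk1 a) (lt_iterate (lt_A hk1 a) (k-1) (by omega) 0)

lemma A_zero_strictMono {k : ℕ} (hk : 2 ≤ k) : StrictMono (fun a => A a k 0) :=
  strictMono_nat_of_lt_succ (A_zero_lt hk)

lemma self_lt_A_zero {k : ℕ} (hk : 2 ≤ k) : ∀ a, a < A a k 0 := by
  intro a
  induction a with
  | zero => rw [A_zero_eq]; omega
  | succ a ih => have := A_zero_lt hk a; omega

lemma iter_A0 (k j : ℕ) : ∀ x, (A 0 k)^[j] x = x + j := by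
  induction j with
  | zero => simp
  | succ j ih =>
    intro x
    rw [Function.iterate_succ_apply', ih x, A_zero_eq]
    omega

lemma A_one_zero (k : ℕ) : A 1 k 0 = k := by rw [A_succ_zero, iter_A0]; omega
lemma A_one_succ (k b : ℕ) : A 1 k (b+1) = A 1 k b + k := by rw [A_succ_succ, iter_A0]


lemma IsNF_unique {k m a b l a' b' l' : ℕ} (h1 : IsNF k m a b l) (h2 : IsNF k m a' b' l') :
    a = a' ∧ b = b' ∧ l = l' := by
  obtain ⟨e1, hA1, ha1, hb1⟩ := h1
  obtain ⟨e2, hA2, ha2, hb2⟩ := h2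
  have haa : a = a' := le_antisymm (ha2 a hA1) (ha1 a' hA2)
  subst haa
  have hbb : b = b' := le_antisymm (hb2 b (by omega)) (hb1 b' (by omega))
  subst hbb
  exact ⟨rfl, rfl, by omega⟩

lemma nf_exists {k m : ℕ} (hk : 2 ≤ k) (hm : 0 < m) : ∃ a b l, IsNF k m a b l := by
  have hk1 : 0 < k := by omega
  have hP0 : A 0 k 0 ≤ m := by rw [A_zero_eq]; omega
  set a := Nat.findGreatest (fun a => A a k 0 ≤ m) m with ha
  have hPa : A a k 0 ≤ m :=
    Nat.findGreatest_spec (P := fun a => A a k 0 ≤ m) (Nat.zero_le m) hP0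
  have hamax : ∀ a', A a' k 0 ≤ m → a' ≤ a := fun a' h' =>
    Nat.le_findGreatest (by have := self_lt_A_zero hk a'; omega) h'
  set b := Nat.findGreatest (fun b => A a k b ≤ m) m with hb
  have hPb : A a k b ≤ m :=
    Nat.findGreatest_spec (P := fun b => A a k b ≤ m) (Nat.zero_le m) hPa
  have hbmax : ∀ b', A a k b' ≤ m → b' ≤ b := fun b' h' =>
    Nat.le_findGreatest (by have := lt_A hk1 a b'; omega) h'
  exact ⟨a, b, m - A a k b, by omega, hPa, hamax, hbmax⟩

open Ordinal

lemma A_pos {k : ℕ} (hk : 0 < k) (a b : ℕ) : 0 < A a k b := by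
  have := lt_A hk a b; omega

lemma psi_zero' {k : ℕ} (hk : 0 < k) {o : Ordinal} (h : Psi k 0 o) : o = 0 := by
  have key : ∀ m (o : Ordinal), Psi k m o → m = 0 → o = 0 := by
    intro m o h
    cases h with
    | zero => intro; rfl
    | @base b l hnf => intro hm; exfalso; have := A_pos hk 0 b; omega
    | @one b l ob hnf _ => intro hm; exfalso; have := A_pos hk 1 b; omega
    | @ge a b l oa ob ha hnf _ _ => intro hm; exfalso; have := A_pos hk a b; omega
  exact key 0 o h rfl

lemma psi_nf {k m : ℕ} {o : Ordinal} (h : Psi k m o) (hm : 0 < m) :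
    ∃ a b l, IsNF k m a b l := by
  cases h with
  | zero => omega
  | base hnf => exact ⟨_, _, _, hnf⟩
  | one hnf _ => exact ⟨_, _, _, hnf⟩
  | ge _ hnf _ _ => exact ⟨_, _, _, hnf⟩

lemma psi_inv {k m a b l : ℕ} {o : Ordinal} (hk : 0 < k) (h : Psi k m o)
    (hnf : IsNF k m a b l) :
    (a = 0 ∧ o = (b : Ordinal) + 1) ∨
    (a = 1 ∧ ∃ ob, Psi k b ob ∧ o = omega0 * (1 + ob) + (l : Ordinal)) ∨
    (2 ≤ a ∧ ∃ oa ob, Psi k a oa ∧ Psi k b ob ∧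
      o = omega0 ^ (omega0 + msub 2 oa) + omega0 * ob + (l : Ordinal)) := by
  cases h with
  | zero => exfalso; have := A_pos hk a b; have := hnf.1; omega
  | base hnf' =>
    obtain ⟨ha, hb, hl⟩ := IsNF_unique hnf' hnf
    subst ha; subst hb; subst hl
    exact Or.inl ⟨rfl, rfl⟩
  | one hnf' hob =>
    obtain ⟨ha, hb, hl⟩ := IsNF_unique hnf' hnf
    subst ha; subst hb; subst hl
    exact Or.inr (Or.inl ⟨rfl, _, hob, rfl⟩)
  | ge ha2 hnf' hoa hob =>
    obtain ⟨ha, hb, hl⟩ := IsNF_unique hnf' hnf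
    subst ha; subst hb; subst hl
    exact Or.inr (Or.inr ⟨ha2, _, _, hoa, hob, rfl⟩)

lemma psi_unique {k : ℕ} (hk : 2 ≤ k) :
    ∀ m, ∀ {o1 o2 : Ordinal}, Psi k m o1 → Psi k m o2 → o1 = o2 := by
  have hk1 : 0 < k := by omega
  intro m
  induction m using Nat.strong_induction_on with
  | _ m IH =>
    intro o1 o2 h1 h2
    rcases Nat.eq_zero_or_pos m with rfl | hm
    · rw [psi_zero' hk1 h1, psi_zero' hk1 h2]
    · obtain ⟨a, b, l, hnf⟩ := psi_nf h1 hm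
      have hb_lt : b < m := lt_of_lt_of_le (lt_A hk1 a b) (by have := hnf.1; omega)
      have ha_lt : a < m := lt_of_lt_of_le (self_lt_A_zero hk a) hnf.2.1
      rcases psi_inv hk1 h1 hnf with ⟨ha1, rfl⟩ | ⟨ha1, ob1, hob1, rfl⟩ |
          ⟨ha1, oa1, ob1, hoa1, hob1, rfl⟩ <;>
        rcases psi_inv hk1 h2 hnf with ⟨ha2, rfl⟩ | ⟨ha2, ob2, hob2, rfl⟩ |
          ⟨ha2, oa2, ob2, hoa2, hob2, rfl⟩ <;>
        try omega
      · rfl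
      · rw [IH b hb_lt hob1 hob2]
      · rw [IH b hb_lt hob1 hob2, IH a ha_lt hoa1 hoa2]

lemma psi_total {k : ℕ} (hk : 2 ≤ k) : ∀ m, ∃ o, Psi k m o := by
  have hk1 : 0 < k := by omega
  intro m
  induction m using Nat.strong_induction_on with
  | _ m IH =>
    rcases Nat.eq_zero_or_pos m with rfl | hm
    · exact ⟨0, Psi.zero⟩
    · obtain ⟨a, b, l, hnf⟩ := nf_exists hk hm
      have hm_eq : m = A a k b + l := hnf.1
      have hb_lt : b < m := lt_of_lt_of_le (lt_A hk1 a b) (by omega)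
      have ha_lt : a < m := lt_of_lt_of_le (self_lt_A_zero hk a) hnf.2.1
      rw [hm_eq] at hnf ⊢
      match a, hnf, IH with
      | 0, hnf, IH => exact ⟨_, Psi.base hnf⟩
      | 1, hnf, IH =>
        obtain ⟨ob, hob⟩ := IH b (hm_eq ▸ hb_lt)
        exact ⟨_, Psi.one hnf hob⟩
      | (a+2), hnf, IH =>
        obtain ⟨ob, hob⟩ := IH b (hm_eq ▸ hb_lt)
        obtain ⟨oa, hoa⟩ := IH (a+2) (hm_eq ▸ ha_lt)
        exact ⟨_, Psi.ge (by omega) hnf hoa hob⟩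

lemma psi_nat {k : ℕ} (hk : 3 ≤ k) {n : ℕ} (hn : n < k) {o : Ordinal}
    (h : Psi k n o) : o = n := by
  have hk1 : 0 < k := by omega
  rcases Nat.eq_zero_or_pos n with rfl | hpos
  · simpa using psi_zero' hk1 h
  · obtain ⟨a, b, l, hnf⟩ := psi_nf h hpos
    have ha0 : a = 0 := by
      by_contra hne
      have h1 : A 1 k 0 ≤ A a k 0 := by
        rcases Nat.eq_or_lt_of_le (Nat.one_le_iff_ne_zero.mpr hne) with he | hl
        · rw [← he]
        · exact le_of_lt (A_zero_strictMono (by omega) hl)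
      have h2 := hnf.2.1
      rw [A_one_zero] at h1
      omega
    subst ha0
    have heq : n = b + 1 + l := by have := hnf.1; rw [A_zero_eq] at this; omega
    have hl0 : l = 0 := by
      have := hnf.2.2.2 (b + l) (by rw [A_zero_eq]; omega)
      omega
    rcases psi_inv hk1 h hnf with ⟨_, rfl⟩ | ⟨ha2, _⟩ | ⟨ha2, _⟩ <;> try omega
    have : n = b + 1 := by omega
    subst this
    push_cast
    ring

lemma msub_lt_msub {x y : Ordinal} (h2 : (2 : Ordinal) ≤ x) (hxy : x < y) :
    msub 2 x < msub 2 y := by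
  unfold msub
  have h2' : ((2 : ℕ) : Ordinal) = (2 : Ordinal) := by norm_num
  rw [h2']
  split_ifs with hx hy hy
  · have key : 2 + (x - 2) < 2 + (y - 2) := by
      rw [Ordinal.add_sub_cancel_of_le h2, Ordinal.add_sub_cancel_of_le (h2.trans hxy.le)]
      exact hxy
    exact (add_lt_add_iff_left _).mp key
  · exact lt_of_lt_of_le (lt_of_le_of_lt (Ordinal.sub_le_self x 2) hx) (le_of_not_gt hy)
  · exact absurd (hxy.trans hy) hx
  · exact hxy

universe u

lemma psi_bound {k : ℕ} (hk : 3 ≤ k) {a : ℕ} (ha2 : 2 ≤ a) {oa : Ordinal.{u}} (hoa : Psi k a oa)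
    (mono : ∀ i j (oi oj : Ordinal.{u}), i < j → j ≤ a → Psi k i oi → Psi k j oj → oi < oj) :
    ∀ n, n < A a k 0 → ∀ o : Ordinal.{u}, Psi k n o → o < omega0 ^ (omega0 + msub 2 oa) := by
  have hk1 : 0 < k := by omega
  have hk2 : 2 ≤ k := by omega
  set e := omega0 + msub 2 oa with he_def
  have he : omega0 ≤ e := le_add_right le_rfl
  have hepos : 0 < e := lt_of_lt_of_le omega0_pos he
  have homega_le : omega0 ≤ omega0 ^ e := left_le_opow _ hepos
  have hprin := principal_add_omega0_opow e
  have hmul : ∀ x : Ordinal, x < omega0 ^ e → omega0 * x < omega0 ^ e := by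
    intro x hx
    calc omega0 * x < omega0 * omega0 ^ e := mul_lt_mul_of_pos_left hx omega0_pos
      _ = omega0 ^ (1 + e) := by rw [opow_add omega0 1 e, opow_one]
      _ = omega0 ^ e := by rw [one_add_of_omega0_le he]
  have hlt_omega : ∀ j : ℕ, (j : Ordinal) < omega0 ^ e := fun j =>
    lt_of_lt_of_le (nat_lt_omega0 j) homega_le
  intro n
  induction n using Nat.strong_induction_on with
  | _ n IH =>
    intro hn o ho
    rcases Nat.eq_zero_or_pos n with rfl | hnpos
    · rw [psi_zero' hk1 ho]; exact opow_pos e omega0_pos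
    obtain ⟨a'', b, l, hnf⟩ := psi_nf ho hnpos
    have hb_lt_n : b < n := lt_of_lt_of_le (lt_A hk1 a'' b) (by have := hnf.1; omega)
    have hb_lt_A : b < A a k 0 := lt_trans hb_lt_n hn
    rcases psi_inv hk1 ho hnf with ⟨_, rfl⟩ | ⟨_, ob, hob, rfl⟩ |
        ⟨ha''2, oa'', ob, hoa'', hob, rfl⟩
    · have hcast : ((b : Ordinal) + 1) = ((b + 1 : ℕ) : Ordinal) := by push_cast; ring
      rw [hcast]; exact hlt_omega (b + 1)
    · have hob_lt := IH b hb_lt_n hb_lt_A ob hob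
      have h1 : 1 + ob < omega0 ^ e := hprin (lt_of_lt_of_le one_lt_omega0 homega_le) hob_lt
      exact hprin (hmul _ h1) (hlt_omega l)
    · have ha''_lt_a : a'' < a := by
        have h2 := hnf.2.1
        by_contra hle
        have hge : A a k 0 ≤ A a'' k 0 := by
          rcases Nat.eq_or_lt_of_le (Nat.le_of_not_lt hle) with heq | hlt
          · rw [heq]
          · exact le_of_lt (A_zero_strictMono hk2 hlt)
        omega
      have hoa''_lt : oa'' < oa := mono a'' a oa'' oa ha''_lt_a (le_refl a) hoa'' hoa
      have h2oa'' : (2 : Ordinal) ≤ oa'' := by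
        obtain ⟨o2, ho2⟩ := psi_total hk2 2
        have ho2e : o2 = ((2 : ℕ) : Ordinal) := psi_nat hk (by omega) ho2
        rcases Nat.eq_or_lt_of_le ha''2 with heq | hlt
        · have huq := psi_unique hk2 a'' hoa'' (heq ▸ ho2)
          rw [huq, ho2e]; norm_num
        · have hmo := mono 2 a'' o2 oa'' hlt ha''_lt_a.le ho2 hoa''
          rw [ho2e] at hmo
          exact le_of_lt (by exact_mod_cast hmo)
      have hexp : omega0 + msub 2 oa'' < e := by
        rw [he_def]; exact (add_lt_add_iff_left _).2 (msub_lt_msub h2oa'' hoa''_lt)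
      have hterm1 : omega0 ^ (omega0 + msub 2 oa'') < omega0 ^ e :=
        (opow_lt_opow_iff_right one_lt_omega0).2 hexp
      have hob_lt := IH b hb_lt_n hb_lt_A ob hob
      exact hprin (hprin hterm1 (hmul _ hob_lt)) (hlt_omega l)

lemma psi_mono {k : ℕ} (hk : 3 ≤ k) :
    ∀ n m (o o' : Ordinal.{u}), m < n → Psi k m o' → Psi k n o → o' < o := by
  have hk1 : 0 < k := by omega
  have hk2 : 2 ≤ k := by omega
  intro n
  induction n using Nat.strong_induction_on with
  | _ n IH =>
    intro m o o' hmn h' h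
    have hn : 0 < n := by omega
    have key : ∀ o o' : Ordinal.{u}, Psi k (n-1) o' → Psi k n o → o' < o := by
      clear h' h hmn
      intro o o' h' h
      obtain ⟨a, b, l, hnf⟩ := psi_nf h hn
      have hm_eq : n = A a k b + l := hnf.1
      have hb1_lt_n : b + 1 ≤ n := by have := lt_A hk1 a b; omega
      rcases psi_inv hk1 h hnf with ⟨ha0, rfl⟩ | ⟨ha1, ob, hob, rfl⟩ |
          ⟨ha2, oa, ob, hoa, hob, rfl⟩
      · -- a = 0
        subst ha0
        rw [A_zero_eq] at hm_eq
        have hl0 : l = 0 := by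
          have := hnf.2.2.2 (b + l) (by rw [A_zero_eq]; omega)
          omega
        have hnk : n < k := by
          by_contra hge
          have := hnf.2.2.1 1 (by rw [A_one_zero]; omega)
          omega
        have hneq : n = b + 1 := by omega
        have ho' : o' = ((n - 1 : ℕ) : Ordinal) := psi_nat hk (by omega) h'
        rw [ho']
        have hcast : ((b : Ordinal) + 1) = ((b + 1 : ℕ) : Ordinal) := by push_cast; ring
        rw [hcast]
        exact_mod_cast (by omega : n - 1 < b + 1)
      · -- a = 1
        subst ha1
        rcases Nat.eq_zero_or_pos l with hl0 | hlpos
        · subst hl0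
          cases b with
          | zero =>
            have hob0 : ob = 0 := psi_zero' hk1 hob
            have ho' : o' = ((n - 1 : ℕ) : Ordinal) := by
              apply psi_nat hk _ h'
              have : n = k := by rw [hm_eq, A_one_zero]; omega
              omega
            rw [ho', hob0]
            simpa using nat_lt_omega0 (n - 1)
          | succ b0 =>
            have hs : A 1 k (b0 + 1) = A 1 k b0 + k := A_one_succ k b0
            have hnf' : IsNF k (n - 1) 1 b0 (k - 1) := by
              refine ⟨by omega, ?_, ?_, ?_⟩
              · have hm0 : A 1 k 0 ≤ A 1 k b0 := (A_strictMono hk1 1).monotone (Nat.zero_le b0)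
                omega
              · intro a' h''
                exact hnf.2.2.1 a' (by omega)
              · intro b' h''
                by_contra hgt
                have : A 1 k (b0 + 1) ≤ A 1 k b' := (A_strictMono hk1 1).monotone (by omega)
                omega
            rcases psi_inv hk1 h' hnf' with ⟨h0, _⟩ | ⟨_, ob', hob', rfl⟩ | ⟨hgg, _⟩
            · omega
            swap
            · omega
            have hob'_lt : ob' < ob := by
              refine IH (b0 + 1) ?_ b0 ob ob' (by omega) hob' hob
              have := lt_A hk1 1 (b0 + 1); omega
            calc omega0 * (1 + ob') + ((k - 1 : ℕ) : Ordinal)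
                < omega0 * (1 + ob') + omega0 := (add_lt_add_iff_left _).2 (nat_lt_omega0 _)
              _ = omega0 * (1 + ob' + 1) := by rw [mul_add omega0 (1 + ob') 1, mul_one]
              _ ≤ omega0 * (1 + ob) := by
                  apply mul_le_mul_right
                  rw [add_assoc]
                  exact (add_le_add_iff_left 1).2 (by rw [add_one_eq_succ]; exact Order.succ_le_of_lt hob'_lt)
              _ ≤ omega0 * (1 + ob) + ((0 : ℕ) : Ordinal) := by simp
        · -- l > 0
          have hm0 : A 1 k 0 ≤ A 1 k b := (A_strictMono hk1 1).monotone (Nat.zero_le b)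
          have hnf' : IsNF k (n - 1) 1 b (l - 1) := by
            refine ⟨by omega, by omega, ?_, ?_⟩
            · intro a' h''; exact hnf.2.2.1 a' (by omega)
            · intro b' h''; exact hnf.2.2.2 b' (by omega)
          rcases psi_inv hk1 h' hnf' with ⟨h0, _⟩ | ⟨_, ob', hob', rfl⟩ | ⟨hgg, _⟩
          · omega
          swap
          · omega
          rw [psi_unique hk2 b hob' hob]
          exact (add_lt_add_iff_left _).2 (by exact_mod_cast (by omega : l - 1 < l))
      · -- 2 ≤ a
        rcases Nat.eq_zero_or_pos l with hl0 | hlpos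
        · subst hl0
          cases b with
          | zero =>
            have hob0 : ob = 0 := psi_zero' hk1 hob
            have hne : n = A a k 0 := by omega
            have ha_lt_n : a < n := by have := self_lt_A_zero hk2 a; omega
            have hb := psi_bound hk ha2 hoa
              (fun i j oi oj hij hja hoi hoj => IH j (by omega) i oj oi hij hoi hoj)
              (n - 1) (by omega) o' h'
            rw [hob0]
            simpa using hb
          | succ b0 =>
            have hs : A a k b0 < A a k (b0 + 1) := A_strictMono hk1 a (by omega)
            have hnf' : IsNF k (n - 1) a b0 (n - 1 - A a k b0) := by
              refine ⟨by omega, ?_, ?_, ?_⟩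
              · have hm0 : A a k 0 ≤ A a k b0 := (A_strictMono hk1 a).monotone (Nat.zero_le b0)
                omega
              · intro a' h''; exact hnf.2.2.1 a' (by omega)
              · intro b' h''
                by_contra hgt
                have : A a k (b0 + 1) ≤ A a k b' := (A_strictMono hk1 a).monotone (by omega)
                omega
            rcases psi_inv hk1 h' hnf' with ⟨h0, _⟩ | ⟨h1, _⟩ | ⟨_, oa', ob', hoa', hob', rfl⟩
            · omega
            · omega
            rw [psi_unique hk2 a hoa' hoa]
            have hob'_lt : ob' < ob := by
              refine IH (b0 + 1) ?_ b0 ob ob' (by omega) hob' hob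
              have := lt_A hk1 a (b0 + 1); omega
            rw [add_assoc, add_assoc]
            apply (add_lt_add_iff_left _).2
            calc omega0 * ob' + ((n - 1 - A a k b0 : ℕ) : Ordinal)
                < omega0 * ob' + omega0 := (add_lt_add_iff_left _).2 (nat_lt_omega0 _)
              _ = omega0 * (ob' + 1) := by rw [mul_add omega0 ob' 1, mul_one]
              _ ≤ omega0 * ob := by
                  apply mul_le_mul_right
                  rw [add_one_eq_succ]; exact Order.succ_le_of_lt hob'_lt
              _ ≤ omega0 * ob + ((0 : ℕ) : Ordinal) := by simp
        · -- l > 0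
          have hm0 : A a k 0 ≤ A a k b := (A_strictMono hk1 a).monotone (Nat.zero_le b)
          have hnf' : IsNF k (n - 1) a b (l - 1) := by
            refine ⟨by omega, by omega, ?_, ?_⟩
            · intro a' h''; exact hnf.2.2.1 a' (by omega)
            · intro b' h''; exact hnf.2.2.2 b' (by omega)
          rcases psi_inv hk1 h' hnf' with ⟨h0, _⟩ | ⟨h1, _⟩ | ⟨_, oa', ob', hoa', hob', rfl⟩
          · omega
          · omega
          rw [psi_unique hk2 a hoa' hoa, psi_unique hk2 b hob' hob]
          exact (add_lt_add_iff_left _).2 (by exact_mod_cast (by omega : l - 1 < l))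
    rcases Nat.lt_or_ge m (n - 1) with hm | hm
    · obtain ⟨o'', h''⟩ := psi_total hk2 (n - 1)
      exact lt_trans (IH (n - 1) (by omega) m o'' o' hm h' h'') (key o o'' h'' h)
    · have hme : m = n - 1 := by omega
      rw [hme] at h'
      exact key o o' h' h


/-- For `m > 0`, `ψ_k(m-1) < ψ_k(m)`. -/
theorem psi_strict_mono (k m : ℕ) (o o' : Ordinal) (hk : 3 ≤ k) (hm : 0 < m)
    (h' : Psi k (m - 1) o') (h : Psi k m o) : o' < o :=
  psi_mono hk m (m - 1) o o' (by omega) h' h
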